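/- If R is a right Noetherian right small ring, then every injective right R-module E satisfies Hom(E, R/I) = 0 for every right ideal I of R; in particular every injective right R-module is R-projective. -/
import Mathlib


universe u v

/-- A module `M` is *max-projective* if every homomorphism `M → R/I`, for `I` a
maximal right ideal of `R`, factors through the canonical projection `R → R/I`. -/
def MaxProjective (R : Type u) [Ring R] (M : Type v) [AddCommGroup M] [Module R M] : Prop :=
  ∀ I : Submodule R R, IsCoatom I → ∀ g : M →ₗ[R] R ⧸ I,
    ∃ h : M →ₗ[R] R, I.mkQ.comp h = g

/-- A module `M` is *`R`-projective* if every homomorphism `M → R/I`, for `I` any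
right ideal of `R`, factors through the canonical projection `R → R/I`. -/
def RProjective (R : Type u) [Ring R] (M : Type v) [AddCommGroup M] [Module R M] : Prop :=
  ∀ I : Submodule R R, ∀ g : M →ₗ[R] R ⧸ I,
    ∃ h : M →ₗ[R] R, I.mkQ.comp h = g

/-- If `R` is right Noetherian and right small (`Rad(E) = E` for every injective
module `E`), then `Hom(E, R/I) = 0` for every injective `E` and every right ideal
`I`; in particular every injective module is `R`-projective. -/
theorem noetherian_small_hom_vanishes (R : Type u) [Ring R] [IsNoetherianRing R]
    (hsmall : ∀ (E : Type u) [AddCommGroup E] [Module R E], Module.Injective R E →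
      sInf {N : Submodule R E | IsCoatom N} = ⊤) :
    ∀ (E : Type u) [AddCommGroup E] [Module R E], Module.Injective R E →
      (∀ (I : Submodule R R) (f : E →ₗ[R] R ⧸ I), f = 0) ∧ RProjective R E := by
  intro E _ _ hE
  -- E has no coatoms
  have hno : ∀ N : Submodule R E, ¬ IsCoatom N := by
    intro N hN
    have h1 : sInf {N : Submodule R E | IsCoatom N} ≤ N := sInf_le hN
    rw [hsmall E hE] at h1
    exact hN.1 (top_le_iff.mp h1)
  have hvan : ∀ (I : Submodule R R) (f : E →ₗ[R] R ⧸ I), f = 0 := by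
    intro I f
    by_contra hf
    -- the range of f is a nonzero Noetherian module
    haveI : IsNoetherian R (R ⧸ I) := inferInstance
    set M : Submodule R (R ⧸ I) := LinearMap.range f with hM
    haveI : IsNoetherian R M := inferInstance
    have hMne : (⊥ : Submodule R M) ≠ ⊤ := by
      intro h
      apply hf
      ext x
      have hx : f x ∈ M := LinearMap.mem_range_self f x
      have : (⟨f x, hx⟩ : M) ∈ (⊤ : Submodule R M) := trivial
      rw [← h, Submodule.mem_bot] at this
      simpa [Subtype.ext_iff] using this
    haveI : IsCoatomic (Submodule R M) :=
      isCoatomic_of_orderTop_gt_wellFounded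
        (wellFounded_gt (α := Submodule R M))
    rcases eq_top_or_exists_le_coatom (⊥ : Submodule R M) with h | ⟨K, hK, -⟩
    · exact hMne h
    -- pull K back to a coatom of E
    haveI : IsSimpleModule R (M ⧸ K) := isSimpleModule_iff_isCoatom.mpr hK
    have hsurj : Function.Surjective (K.mkQ.comp f.rangeRestrict) :=
      K.mkQ_surjective.comp f.surjective_rangeRestrict
    exact hno _ (LinearMap.isCoatom_ker_of_surjective hsurj)
  refine ⟨hvan, ?_⟩
  intro I g
  exact ⟨0, by rw [hvan I g]; ext x; simp⟩
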